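/- In the VPG construction setup: let u, v ∈ V(T) be distinct vertices such that u is an ancestor of v. Then (a) l_y(v) ∉ [l_y(u), r_y(u)]; (b) l_x(v) ∈ [l_x(u), r_x(u)]; and (c) l_y(u) ∈ [l_y(v), r_y(v)] if and only if u is the parent of v. -/

import Mathlib

open SimpleGraph Set Function

/-- `u` is an ancestor of `v` with respect to root `r`:
`u` lies on the unique path in `T` from `r` to `v`. -/
def IsAncestor {V : Type*} (T : SimpleGraph V) (r u v : V) : Prop :=
  ∀ p : T.Walk r v, p.IsPath → u ∈ p.support

/-- `u` is the parent of `v` with respect to root `r`. -/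
def IsParent {V : Type*} (T : SimpleGraph V) (r u v : V) : Prop :=
  IsAncestor T r u v ∧ u ≠ v ∧ T.Adj u v

/-- `L^r(u)`: the set of leaves of `T` that are descendants of `u`. -/
def LeafSet {V : Type*} (T : SimpleGraph V) [Fintype V] [DecidableRel T.Adj] (r u : V) :
    Set V :=
  {c | T.degree c = 1 ∧ IsAncestor T r u c}

/-- The leaf `c_{j mod k}` index. -/
def cidx {k : ℕ} (hk : 0 < k) (j : ℕ) : Fin k := ⟨j % k, Nat.mod_lt _ hk⟩

/-- A set `A` of leaves is cyclically consecutive with respect to the enumeration `c`. -/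
def CycConsec {V : Type*} {k : ℕ} (hk : 0 < k) (c : Fin k → V) (A : Set V) : Prop :=
  ∃ j m : ℕ, A = {x | ∃ t ≤ m, x = c (cidx hk (j + t))}

lemma interior_deg {V : Type*} [Fintype V] {T : SimpleGraph V} [DecidableRel T.Adj]
    {a c : V} (u : V) (p : T.Walk a c) (hp : p.IsPath) (hu : u ∈ p.support)
    (hua : u ≠ a) (huc : u ≠ c) : 2 ≤ T.degree u := by
  induction p with
  | nil => simp only [SimpleGraph.Walk.support_nil, List.mem_singleton] at hu; exact absurd hu hua
  | @cons x y z hadj q ih =>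
    rw [SimpleGraph.Walk.cons_isPath_iff] at hp
    rw [SimpleGraph.Walk.support_cons] at hu
    rcases List.mem_cons.1 hu with h | h
    · exact absurd h hua
    · rcases eq_or_ne u y with rfl | hne
      · cases q with
        | nil => exact absurd rfl huc
        | @cons _ d _ hadj2 q' =>
          have hd : d ∈ (SimpleGraph.Walk.cons hadj2 q').support := by
            rw [SimpleGraph.Walk.support_cons]
            exact List.mem_cons_of_mem _ q'.start_mem_support
          have hxd : x ≠ d := fun hh => hp.2 (hh ▸ hd)
          have h1 : x ∈ T.neighborFinset u := by
            rw [SimpleGraph.mem_neighborFinset]; exact hadj.symm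
          have h2 : d ∈ T.neighborFinset u := by
            rw [SimpleGraph.mem_neighborFinset]; exact hadj2
          exact Finset.one_lt_card.2 ⟨x, h1, d, h2, hxd⟩
      · exact ih hp.1 h hne huc

lemma tree_dist_eq {V : Type*} {T : SimpleGraph V} (hT : T.IsTree) {a c : V}
    (p : T.Walk a c) (hp : p.IsPath) : T.dist a c = p.length := by
  obtain ⟨q, hq, hlen⟩ := hT.isConnected.exists_path_of_dist a c
  rw [(hT.existsUnique_path a c).unique hq hp] at hlen
  exact hlen.symm

/-- properties of the L-shapes of an ancestor-descendant pair. -/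
theorem stmt7
    {V : Type*} [Fintype V] (T : SimpleGraph V) [DecidableRel T.Adj]
    (hT : T.IsTree) {k : ℕ} (hk : 3 ≤ k) (b : Fin k → V)
    (hinj : Function.Injective b)
    (hleaf : ∀ v : V, T.degree v = 1 ↔ ∃ i : Fin k, v = b i)
    (r' : V) (hr' : 2 ≤ T.degree r')
    (hconsec : ∀ u : V, 2 ≤ T.degree u → ∃ s t : Fin k, s ≤ t ∧
        LeafSet T r' u = {x | ∃ j : Fin k, s ≤ j ∧ j ≤ t ∧ x = b j})
    (hpath0 : ∀ p : T.Walk (b ⟨0, by omega⟩) r', p.IsPath →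
        ∀ w ∈ p.support, w ≠ b ⟨0, by omega⟩ → w ≠ r' → ∃ z : V, LeafSet T r' w = {z})
    (hpath1 : ∀ p : T.Walk (b ⟨1, by omega⟩) r', p.IsPath →
        ∀ w ∈ p.support, w ≠ b ⟨1, by omega⟩ → w ≠ r' → ∃ z : V, LeafSet T r' w = {z})
    (h : ℕ) (hmax : IsGreatest (Set.range fun u : V => T.dist r' u) h)
    (lx rx ly ry : V → ℝ)
    (hb0 : lx (b ⟨0, by omega⟩) = 1.5 ∧ rx (b ⟨0, by omega⟩) = (k : ℝ) - 1 ∧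
      ly (b ⟨0, by omega⟩) = 0 ∧
      ry (b ⟨0, by omega⟩) = (h : ℝ) - (T.dist r' (b ⟨0, by omega⟩) : ℝ) + 2)
    (hb1 : lx (b ⟨1, by omega⟩) = 1 ∧ rx (b ⟨1, by omega⟩) = 2 ∧
      ly (b ⟨1, by omega⟩) = 1 ∧
      ry (b ⟨1, by omega⟩) = (h : ℝ) - (T.dist r' (b ⟨1, by omega⟩) : ℝ) + 2)
    (hbk : lx (b ⟨k - 1, by omega⟩) = (k : ℝ) - 1 ∧ rx (b ⟨k - 1, by omega⟩) = (k : ℝ) ∧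
      ly (b ⟨k - 1, by omega⟩) = 0 ∧
      ry (b ⟨k - 1, by omega⟩) = (h : ℝ) - (T.dist r' (b ⟨k - 1, by omega⟩) : ℝ) + 2)
    (hbi : ∀ i : Fin k, 2 ≤ (i : ℕ) → (i : ℕ) ≤ k - 2 →
      lx (b i) = ((i : ℕ) : ℝ) ∧ rx (b i) = ((i : ℕ) : ℝ) + 1 ∧ ly (b i) = 1 ∧
      ry (b i) = (h : ℝ) - (T.dist r' (b i) : ℝ) + 2)
    (hintv : ∀ v : V, 2 ≤ T.degree v →
      lx v = sInf (lx '' LeafSet T r' v) ∧ rx v = sSup (lx '' LeafSet T r' v) ∧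
      ly v = (h : ℝ) - (T.dist r' v : ℝ) + 1 ∧ ry v = (h : ℝ) - (T.dist r' v : ℝ) + 2)
    :
    ∀ u v : V, u ≠ v → IsAncestor T r' u v →
      (ly v ∉ Set.Icc (ly u) (ry u)) ∧
      (lx v ∈ Set.Icc (lx u) (rx u)) ∧
      (ly u ∈ Set.Icc (ly v) (ry v) ↔ IsParent T r' u v) := by

  classical
  intro u v huv hanc
  -- basic path setup
  have hvr : v ≠ r' := by
    rintro rfl
    have := hanc SimpleGraph.Walk.nil SimpleGraph.Walk.IsPath.nil
    simp only [SimpleGraph.Walk.support_nil, List.mem_singleton] at this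
    exact huv this
  obtain ⟨p, hp, hplen⟩ := hT.isConnected.exists_path_of_dist r' v
  have hu : u ∈ p.support := hanc p hp
  -- distance decomposition
  have hspec := p.take_spec hu
  have hlen2 : (p.takeUntil u hu).length + (p.dropUntil u hu).length = p.length := by
    rw [← SimpleGraph.Walk.length_append, hspec]
  have hdu : T.dist r' u = (p.takeUntil u hu).length := tree_dist_eq hT _ (hp.takeUntil hu)
  have hduv : T.dist u v = (p.dropUntil u hu).length := tree_dist_eq hT _ (hp.dropUntil hu)
  have hdv : T.dist r' v = p.length := tree_dist_eq hT p hp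
  have hsum : T.dist r' v = T.dist r' u + T.dist u v := by omega
  have hduvpos : 0 < T.dist u v := hT.isConnected.pos_dist_of_ne huv
  have hdvh : T.dist r' v ≤ h := hmax.2 ⟨v, rfl⟩
  have rd1 : (T.dist r' u : ℝ) + 1 ≤ (T.dist r' v : ℝ) := by
    have : T.dist r' u + 1 ≤ T.dist r' v := by omega
    exact_mod_cast this
  have rd2 : (T.dist r' v : ℝ) ≤ (h : ℝ) := by exact_mod_cast hdvh
  -- u is internal
  have hdegu : 2 ≤ T.degree u := by
    rcases eq_or_ne u r' with rfl | hur
    · exact hr'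
    · exact interior_deg u p hp hu hur huv
  obtain ⟨hlxu, hrxu, hlyu, hryu⟩ := hintv u hdegu
  have hlyu2 : (2 : ℝ) ≤ ly u := by rw [hlyu]; linarith
  -- parent characterization
  have hparent : IsParent T r' u v ↔ T.dist r' v ≤ T.dist r' u + 1 := by
    constructor
    · rintro ⟨-, -, hadj⟩
      have h1 : T.dist u v = 1 := SimpleGraph.dist_eq_one_iff_adj.2 hadj
      omega
    · intro hle
      have h1 : T.dist u v = 1 := by omega
      exact ⟨hanc, huv, SimpleGraph.dist_eq_one_iff_adj.1 h1⟩
  -- LeafSet u facts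
  obtain ⟨lus, lut, hlust, hLu⟩ := hconsec u hdegu
  have hbsu : b lus ∈ LeafSet T r' u := by
    rw [hLu]; exact ⟨lus, le_refl _, hlust, rfl⟩
  have hfinu : (lx '' LeafSet T r' u).Finite := (Set.toFinite _).image _
  -- degree of v
  have hdegvpos : 0 < T.degree v := by
    rw [SimpleGraph.degree_pos_iff_exists_adj]
    exact ⟨_, p.reverse.adj_snd (SimpleGraph.Walk.not_nil_of_ne hvr)⟩
  rcases Nat.lt_or_ge (T.degree v) 2 with hv1 | hv2
  · -- v is a leaf
    have hdeg1 : T.degree v = 1 := by omega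
    obtain ⟨i, hvb⟩ := (hleaf v).1 hdeg1
    have hleafv : 0 ≤ ly v ∧ ly v ≤ 1 ∧ ry v = (h : ℝ) - (T.dist r' v : ℝ) + 2 := by
      subst hvb
      rcases Nat.lt_or_ge (i : ℕ) 2 with h2 | h2
      · rcases Nat.lt_or_ge (i : ℕ) 1 with h0 | h0
        · have : i = ⟨0, by omega⟩ := Fin.ext (show (i:ℕ) = 0 by omega)
          rw [this]
          exact ⟨by rw [hb0.2.2.1], by rw [hb0.2.2.1]; norm_num, hb0.2.2.2⟩
        · have : i = ⟨1, by omega⟩ := Fin.ext (show (i:ℕ) = 1 by omega)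
          rw [this]
          exact ⟨by rw [hb1.2.2.1]; norm_num, by rw [hb1.2.2.1], hb1.2.2.2⟩
      · rcases Nat.lt_or_ge (i : ℕ) (k - 1) with hik | hik
        · obtain ⟨-, -, h3, h4⟩ := hbi i h2 (by omega)
          exact ⟨by rw [h3]; norm_num, by rw [h3], h4⟩
        · have : i = ⟨k - 1, by omega⟩ := Fin.ext (show (i:ℕ) = k - 1 by have := i.2; omega)
          rw [this]
          exact ⟨by rw [hbk.2.2.1], by rw [hbk.2.2.1]; norm_num, hbk.2.2.2⟩
    obtain ⟨hly0, hly1, hryv⟩ := hleafv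
    have hmemL : v ∈ LeafSet T r' v ∨ True := Or.inr trivial
    have hvinLu : v ∈ LeafSet T r' u := ⟨hdeg1, hanc⟩
    have hlxmem : lx v ∈ lx '' LeafSet T r' u := Set.mem_image_of_mem _ hvinLu
    refine ⟨?_, ?_, ?_⟩
    · rintro ⟨ha1, -⟩
      linarith
    · exact ⟨by rw [hlxu]; exact csInf_le hfinu.bddBelow hlxmem,
        by rw [hrxu]; exact le_csSup hfinu.bddAbove hlxmem⟩
    · rw [hparent]
      constructor
      · rintro ⟨-, h2⟩
        rw [hlyu, hryv] at h2
        have : (T.dist r' v : ℝ) ≤ (T.dist r' u : ℝ) + 1 := by linarith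
        exact_mod_cast this
      · intro hle
        have hle' : (T.dist r' v : ℝ) ≤ (T.dist r' u : ℝ) + 1 := by exact_mod_cast hle
        exact ⟨by linarith, by rw [hlyu, hryv]; linarith⟩
  · -- v is internal
    obtain ⟨hlxv, hrxv, hlyv, hryv⟩ := hintv v hv2
    obtain ⟨lvs, lvt, hlvst, hLv⟩ := hconsec v hv2
    have hbsv : b lvs ∈ LeafSet T r' v := by
      rw [hLv]; exact ⟨lvs, le_refl _, hlvst, rfl⟩
    have hsub : LeafSet T r' v ⊆ LeafSet T r' u := by
      rintro c ⟨hc1, hc2⟩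
      refine ⟨hc1, fun q hq => ?_⟩
      have hvq : v ∈ q.support := hc2 q hq
      have huq : u ∈ (q.takeUntil v hvq).support := hanc _ (hq.takeUntil hvq)
      exact SimpleGraph.Walk.support_takeUntil_subset q hvq huq
    have hfinv : (lx '' LeafSet T r' v).Finite := (Set.toFinite _).image _
    have hnev : (lx '' LeafSet T r' v).Nonempty := ⟨_, Set.mem_image_of_mem _ hbsv⟩
    refine ⟨?_, ?_, ?_⟩
    · rintro ⟨ha1, -⟩
      rw [hlyv, hlyu] at ha1
      linarith
    · constructor
      · rw [hlxu, hlxv]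
        exact csInf_le_csInf hfinu.bddBelow hnev (Set.image_mono hsub)
      · rw [hlxv, hrxu]
        calc sInf (lx '' LeafSet T r' v) ≤ lx (b lvs) :=
              csInf_le hfinv.bddBelow (Set.mem_image_of_mem _ hbsv)
          _ ≤ sSup (lx '' LeafSet T r' u) :=
              le_csSup hfinu.bddAbove (Set.mem_image_of_mem _ (hsub hbsv))
    · rw [hparent]
      constructor
      · rintro ⟨-, h2⟩
        rw [hlyu, hryv] at h2
        have : (T.dist r' v : ℝ) ≤ (T.dist r' u : ℝ) + 1 := by linarith
        exact_mod_cast this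
      · intro hle
        have hle' : (T.dist r' v : ℝ) ≤ (T.dist r' u : ℝ) + 1 := by exact_mod_cast hle
        exact ⟨by rw [hlyv, hlyu]; linarith, by rw [hlyu, hryv]; linarith⟩
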